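/- Let F be a field of characteristic ≠ 2, and let U ≠ 0 be a strictly lower triangular n×n matrix. Then A(U) ≅ A(0_n) as graded algebras if and only if either (i) every nonzero row of U has its last nonzero entry (leader) in the first column, or (ii) for every position (r,c) with c > 1 and u_{rc} ≠ 0 we have 2 u_{ri} + u_{rc} u_{ci} = 0 for all 1 ≤ i < c. -/

import Mathlib

open MvPolynomial

set_option maxHeartbeats 1000000
set_option synthInstance.maxHeartbeats 100000

noncomputable section

variable (F : Type) [Field F]

/-- The defining relations of the nil graded algebra `A(T)`. -/
def relSet {n : ℕ} (T : Matrix (Fin n) (Fin n) F) : Set (MvPolynomial (Fin n) F) :=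
  { p | ∃ i : Fin n,
      p = X i ^ 2 - ∑ j ∈ Finset.univ.filter (fun j => j < i), C (T i j) * X j * X i }

/-- The nil graded algebra `A(T)` associated to a strictly lower triangular matrix `T`. -/
abbrev NTAlg {n : ℕ} (T : Matrix (Fin n) (Fin n) F) : Type :=
  MvPolynomial (Fin n) F ⧸ Ideal.span (relSet F T)

/-- The generators `X i` of `A(T)`. -/
def NTgen {n : ℕ} (T : Matrix (Fin n) (Fin n) F) (i : Fin n) : NTAlg F T :=
  Ideal.Quotient.mk _ (X i)

/-- An algebra isomorphism is degree preserving iff it (and its inverse) maps the span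
of the degree-2 generators into the span of the degree-2 generators. -/
def IsGradedIso {n : ℕ} {T S : Matrix (Fin n) (Fin n) F}
    (e : NTAlg F T ≃ₐ[F] NTAlg F S) : Prop :=
  (∀ j, e (NTgen F T j) ∈ Submodule.span F (Set.range (NTgen F S))) ∧
  (∀ j, e.symm (NTgen F S j) ∈ Submodule.span F (Set.range (NTgen F T)))

/-- `A(T)` and `A(S)` are isomorphic in the category 𝒩𝒯. -/
def NTIso {n : ℕ} (T S : Matrix (Fin n) (Fin n) F) : Prop :=
  ∃ e : NTAlg F T ≃ₐ[F] NTAlg F S, IsGradedIso F e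

/-- A matrix is strictly lower triangular. -/
def SLTM {n : ℕ} (T : Matrix (Fin n) (Fin n) F) : Prop :=
  ∀ i j : Fin n, i ≤ j → T i j = 0

/-- The key system of equations (Theorem `theo-Key-condition`). -/
def KeyEq {n : ℕ} (T S Γ : Matrix (Fin n) (Fin n) F) : Prop :=
  ∀ r i k : Fin n, i < k →
    2 * Γ i r * Γ k r + Γ k r ^ 2 * S k i =
      ∑ j ∈ Finset.univ.filter (fun j => j < r),
        T r j * (Γ k j * Γ k r * S k i + Γ k j * Γ i r + Γ i j * Γ k r)

/-- `(r,c)` is the leader position of row `r`: the last nonzero entry of the row. -/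
def IsLeader {n : ℕ} (T : Matrix (Fin n) (Fin n) F) (r c : Fin n) : Prop :=
  T r c ≠ 0 ∧ ∀ j, c < j → T r j = 0


namespace StmtAux
variable {F : Type} [Field F] {n : ℕ}




lemma degree_add (a b : Fin n →₀ ℕ) : (a + b).degree = a.degree + b.degree := by
  simp only [Finsupp.degree_eq_weight_one]; exact map_add _ a b

lemma degree_single (i : Fin n) (k : ℕ) : (Finsupp.single i k).degree = k := by
  simp [Finsupp.degree_eq_weight_one, Finsupp.weight_apply, Finsupp.sum_single_index]

lemma relSet_homog {T : Matrix (Fin n) (Fin n) F} {g : MvPolynomial (Fin n) F}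
    (hg : g ∈ relSet F T) : g.IsHomogeneous 2 := by
  obtain ⟨i, rfl⟩ := hg
  refine ((isHomogeneous_X F i).pow 2).sub (IsHomogeneous.sum _ _ _ fun j _ => ?_)
  have : (0 : ℕ) + 1 + 1 = 2 := rfl
  exact this ▸ (((isHomogeneous_C (Fin n) (T i j)).mul (isHomogeneous_X F j)).mul
    (isHomogeneous_X F i))

lemma coeff_mul_homog2 {g q : MvPolynomial (Fin n) F} (hg : g.IsHomogeneous 2)
    {m : Fin n →₀ ℕ} (hm : m.degree ≤ 2) :
    coeff m (q * g) = coeff 0 q * coeff m g := by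
  rw [coeff_mul]
  rw [Finset.sum_eq_single ((0 : Fin n →₀ ℕ), m)]
  · rintro ⟨m1, m2⟩ hmem hne
    simp only [Finset.HasAntidiagonal.mem_antidiagonal] at hmem
    by_cases h2 : coeff m2 g = 0
    · simp [h2]
    · exfalso
      have hd2 : m2.degree = 2 := by
        by_contra hd
        exact h2 (hg.coeff_eq_zero hd)
      have : m1.degree + m2.degree = m.degree := by rw [← degree_add, hmem]
      have hm1 : m1.degree = 0 := by omega
      have : m1 = 0 := (Finsupp.degree_eq_zero_iff m1).mp hm1
      subst this
      rw [zero_add] at hmem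
      exact hne (by rw [hmem])
  · intro h
    exact absurd (Finset.HasAntidiagonal.mem_antidiagonal.mpr (zero_add m)) h

/-- Generic extraction: a linear functional killing all `q * g`, `g ∈ S`, kills the ideal. -/
lemma extract {S : Set (MvPolynomial (Fin n) F)} {p : MvPolynomial (Fin n) F}
    (hp : p ∈ Ideal.span S) (L : MvPolynomial (Fin n) F →ₗ[F] F)
    (h : ∀ q : MvPolynomial (Fin n) F, ∀ g ∈ S, L (q * g) = 0) : L p = 0 := by
  have key : ∀ q : MvPolynomial (Fin n) F, L (q * p) = 0 := by
    refine Submodule.span_induction (p := fun x _ => ∀ q, L (q * x) = 0)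
      (fun x hx q => h q x hx) (by simp) ?_ ?_ hp
    · intro x y _ _ hx hy q
      rw [mul_add, map_add, hx, hy, add_zero]
    · intro a x _ hx q
      rw [smul_eq_mul, ← mul_assoc, hx]
  simpa using key 1

lemma X_eq_monomial (u : Fin n) : (X u : MvPolynomial (Fin n) F) = monomial (Finsupp.single u 1) 1 := by
  rw [← pow_one (X u), X_pow_eq_monomial]

lemma CXX (a : F) (u v : Fin n) :
    C a * X u * X v = monomial (Finsupp.single u 1 + Finsupp.single v 1) a := by
  rw [X_eq_monomial, X_eq_monomial, C_mul_monomial, monomial_mul, mul_one, mul_one]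

lemma sq_ne_pair {i j k : Fin n} (hjk : j ≠ k) :
    Finsupp.single i 2 ≠ Finsupp.single j 1 + Finsupp.single k 1 := by
  intro h
  have hj := DFunLike.congr_fun h j
  simp only [Finsupp.single_apply, Finsupp.add_apply] at hj
  by_cases hij : i = j <;> by_cases hkj : k = j <;> simp [hij, hkj] at hj <;> omega

lemma pair_eq_sq {a b k : Fin n} :
    Finsupp.single a 1 + Finsupp.single b 1 = Finsupp.single k 2 ↔ a = k ∧ b = k := by
  constructor
  · intro h
    have ha := DFunLike.congr_fun h a
    have hb := DFunLike.congr_fun h b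
    simp only [Finsupp.single_apply, Finsupp.add_apply, if_pos rfl] at ha hb
    constructor
    · by_cases hba : b = a <;> by_cases hka : k = a <;> simp [hba, hka] at ha <;>
        first | (exact hka.symm) | omega
    · by_cases hab : a = b <;> by_cases hkb : k = b <;> simp [hab, hkb] at hb <;>
        first | (exact hkb.symm) | omega
  · rintro ⟨rfl, rfl⟩
    ext x
    simp [Finsupp.single_apply]
    split <;> omega

lemma pair_eq_pair {a b j k : Fin n} (hjk : j ≠ k) :
    Finsupp.single a 1 + Finsupp.single b 1 = Finsupp.single j 1 + Finsupp.single k 1 ↔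
      (a = j ∧ b = k) ∨ (a = k ∧ b = j) := by
  constructor
  · intro h
    have hj : (if a = j then (1:ℕ) else 0) + (if b = j then 1 else 0) = 1 := by
      have := DFunLike.congr_fun h j
      simpa [Finsupp.single_apply, hjk.symm] using this
    have hk : (if a = k then (1:ℕ) else 0) + (if b = k then 1 else 0) = 1 := by
      have := DFunLike.congr_fun h k
      simpa [Finsupp.single_apply, hjk] using this
    by_cases haj : a = j <;> by_cases hbk : b = k
    · exact Or.inl ⟨haj, hbk⟩
    · exfalso
      rw [if_neg (show ¬ a = k by rw [haj]; exact hjk), if_neg hbk] at hk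
      omega
    · exfalso
      rw [if_neg haj, if_neg (show ¬ b = j by rw [hbk]; exact hjk.symm)] at hj
      omega
    · have hb : b = j := by
        by_contra hh
        rw [if_neg haj, if_neg hh] at hj
        omega
      have ha : a = k := by
        by_contra hh
        rw [if_neg hh, if_neg hbk] at hk
        omega
      exact Or.inr ⟨ha, hb⟩
  · rintro (⟨rfl, rfl⟩ | ⟨rfl, rfl⟩)
    · rfl
    · exact add_comm _ _

/-- `E1`: linear coefficients vanish on the relation ideal. -/
lemma E1 {T : Matrix (Fin n) (Fin n) F} {p : MvPolynomial (Fin n) F}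
    (hp : p ∈ Ideal.span (relSet F T)) (i : Fin n) :
    coeff (Finsupp.single i 1) p = 0 := by
  refine extract hp (lcoeff F (Finsupp.single i 1)) (fun q g hg => ?_)
  have h2 := relSet_homog hg
  have : (Finsupp.single i 1).degree ≤ 2 := by rw [degree_single]; omega
  show coeff _ (q * g) = 0
  rw [coeff_mul_homog2 h2 this, h2.coeff_eq_zero (by rw [degree_single]; omega), mul_zero]

/-- coefficient computation on a single relator -/
lemma relator_coeff {T : Matrix (Fin n) (Fin n) F} {g : MvPolynomial (Fin n) F}
    (hg : g ∈ relSet F T) {j k : Fin n} (hjk : j < k) :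
    coeff (Finsupp.single j 1 + Finsupp.single k 1) g
      + T k j * coeff (Finsupp.single k 2) g = 0 := by
  obtain ⟨i, rfl⟩ := hg
  have hne : j ≠ k := ne_of_lt hjk
  rw [coeff_sub, coeff_sub, X_pow_eq_monomial, coeff_monomial, coeff_monomial]
  rw [if_neg (sq_ne_pair hne)]
  rw [coeff_sum, coeff_sum]
  have e1 : ∀ j' ∈ Finset.univ.filter (fun j' => j' < i),
      coeff (Finsupp.single k 2) (C (T i j') * X j' * X i) = 0 := by
    intro j' hj'
    rw [Finset.mem_filter] at hj'
    rw [CXX, coeff_monomial, if_neg]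
    intro h
    obtain ⟨h1, h2⟩ := pair_eq_sq.mp h
    exact absurd (h1.trans h2.symm) (ne_of_lt hj'.2)
  rw [Finset.sum_congr rfl e1, Finset.sum_const, smul_zero]
  by_cases hik : i = k
  · subst hik
    rw [if_pos rfl]
    have e2 : ∀ j' ∈ Finset.univ.filter (fun j' => j' < i),
        coeff (Finsupp.single j 1 + Finsupp.single i 1) (C (T i j') * X j' * X i)
          = if j = j' then T i j' else 0 := by
      intro j' hj'
      rw [Finset.mem_filter] at hj'
      have hcond : (Finsupp.single j' 1 + Finsupp.single i 1
          = Finsupp.single j 1 + Finsupp.single i 1) ↔ (j = j') := by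
        rw [pair_eq_pair hne]
        constructor
        · rintro (⟨h1, -⟩ | ⟨rfl, rfl⟩)
          · exact h1.symm
          · exact absurd hjk (lt_irrefl _)
        · rintro rfl
          exact Or.inl ⟨rfl, rfl⟩
      rw [CXX, coeff_monomial, if_congr hcond rfl rfl]
    rw [Finset.sum_congr rfl e2, Finset.sum_ite_eq, if_pos (by simp [hjk]), sub_zero]
    ring
  · rw [if_neg (fun h => hik ((Finsupp.single_left_inj (two_ne_zero)).mp h))]
    have e2 : ∀ j' ∈ Finset.univ.filter (fun j' => j' < i),
        coeff (Finsupp.single j 1 + Finsupp.single k 1) (C (T i j') * X j' * X i) = 0 := by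
      intro j' hj'
      rw [Finset.mem_filter] at hj'
      rw [CXX, coeff_monomial, if_neg]
      intro h
      rcases (pair_eq_pair hne).mp h with ⟨rfl, rfl⟩ | ⟨rfl, rfl⟩
      · exact hik rfl
      · exact absurd (hj'.2.trans hjk) (lt_irrefl _)
    rw [Finset.sum_congr rfl e2, Finset.sum_const, smul_zero]
    ring

/-- `E2`: reduced quadratic coefficients vanish on the relation ideal. -/
lemma E2 {T : Matrix (Fin n) (Fin n) F} {p : MvPolynomial (Fin n) F}
    (hp : p ∈ Ideal.span (relSet F T)) {j k : Fin n} (hjk : j < k) :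
    coeff (Finsupp.single j 1 + Finsupp.single k 1) p
      + T k j * coeff (Finsupp.single k 2) p = 0 := by
  have hL := extract hp (lcoeff F (Finsupp.single j 1 + Finsupp.single k 1)
      + T k j • lcoeff F (Finsupp.single k 2)) (fun q g hg => ?_)
  · simpa using hL
  · have h2 := relSet_homog hg
    have hd1 : (Finsupp.single j 1 + Finsupp.single k 1).degree ≤ 2 := by
      rw [degree_add, degree_single, degree_single]
    have hd2 : (Finsupp.single k 2).degree ≤ 2 := by rw [degree_single]
    simp only [LinearMap.add_apply, LinearMap.smul_apply, lcoeff_apply, smul_eq_mul]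
    rw [coeff_mul_homog2 h2 hd1, coeff_mul_homog2 h2 hd2]
    have := relator_coeff hg hjk
    linear_combination coeff 0 q * this


lemma sq_expand (d : Fin n → F) :
    (∑ a : Fin n, C (d a) * X a) ^ 2 =
      ∑ a : Fin n, ∑ b : Fin n,
        monomial (Finsupp.single a 1 + Finsupp.single b 1) (d a * d b) := by
  rw [sq, Finset.sum_mul_sum]
  refine Finset.sum_congr rfl fun a _ => Finset.sum_congr rfl fun b _ => ?_
  rw [X_eq_monomial, X_eq_monomial, C_mul_monomial, C_mul_monomial, mul_one, mul_one,
    monomial_mul]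

lemma double_delta (f : Fin n → Fin n → F) (j k : Fin n) :
    (∑ a : Fin n, ∑ b : Fin n, if a = j ∧ b = k then f a b else 0) = f j k := by
  have : ∀ a : Fin n, (∑ b : Fin n, if a = j ∧ b = k then f a b else 0)
      = if a = j then f a k else 0 := by
    intro a
    by_cases ha : a = j
    · simp only [ha, true_and, if_pos rfl]
      rw [Finset.sum_ite_eq' Finset.univ k (f j)]
      simp
    · simp [ha]
  rw [Finset.sum_congr rfl fun a _ => this a, Finset.sum_ite_eq' Finset.univ j (fun a => f a k)]
  simp

lemma coeff_sq_offdiag (d : Fin n → F) {j k : Fin n} (hjk : j ≠ k) :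
    coeff (Finsupp.single j 1 + Finsupp.single k 1) ((∑ a : Fin n, C (d a) * X a) ^ 2)
      = 2 * (d j * d k) := by
  rw [sq_expand]
  rw [coeff_sum]
  have e1 : ∀ a : Fin n, coeff (Finsupp.single j 1 + Finsupp.single k 1)
      (∑ b : Fin n, monomial (Finsupp.single a 1 + Finsupp.single b 1) (d a * d b))
      = ∑ b : Fin n, ((if a = j ∧ b = k then d a * d b else 0)
          + (if a = k ∧ b = j then d a * d b else 0)) := by
    intro a
    rw [coeff_sum]
    refine Finset.sum_congr rfl fun b _ => ?_
    rw [coeff_monomial, if_congr (pair_eq_pair hjk) rfl rfl]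
    by_cases h1 : a = j ∧ b = k <;> by_cases h2 : a = k ∧ b = j
    · exact absurd (h1.1.symm.trans h2.1) hjk
    · rw [if_pos (Or.inl h1), if_pos h1, if_neg h2, add_zero]
    · rw [if_pos (Or.inr h2), if_neg h1, if_pos h2, zero_add]
    · rw [if_neg (by tauto), if_neg h1, if_neg h2, add_zero]
  rw [Finset.sum_congr rfl fun a _ => e1 a]
  rw [Finset.sum_congr rfl fun a _ => Finset.sum_add_distrib]
  rw [Finset.sum_add_distrib, double_delta, double_delta]
  ring

lemma coeff_sq_diag (d : Fin n → F) (k : Fin n) :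
    coeff (Finsupp.single k 2) ((∑ a : Fin n, C (d a) * X a) ^ 2) = d k * d k := by
  rw [sq_expand, coeff_sum]
  have e1 : ∀ a : Fin n, coeff (Finsupp.single k 2)
      (∑ b : Fin n, monomial (Finsupp.single a 1 + Finsupp.single b 1) (d a * d b))
      = ∑ b : Fin n, (if a = k ∧ b = k then d a * d b else 0) := by
    intro a
    rw [coeff_sum]
    refine Finset.sum_congr rfl fun b _ => ?_
    rw [coeff_monomial, if_congr pair_eq_sq rfl rfl]
  rw [Finset.sum_congr rfl fun a _ => e1 a, double_delta]

/-- The key quadratic equations satisfied by the coordinates of a square-zero element. -/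
lemma col_eqs {U : Matrix (Fin n) (Fin n) F} {d : Fin n → F}
    (hmem : (∑ a : Fin n, C (d a) * X a) ^ 2 ∈ Ideal.span (relSet F U))
    {j k : Fin n} (hjk : j < k) :
    2 * (d j * d k) + U k j * (d k * d k) = 0 := by
  have := E2 hmem hjk
  rwa [coeff_sq_offdiag d (ne_of_lt hjk), coeff_sq_diag] at this

/-- linear independence of the generators modulo the relation ideal -/
lemma lin_indep {T : Matrix (Fin n) (Fin n) F} {c : Fin n → F}
    (h : (∑ a : Fin n, C (c a) * X a) ∈ Ideal.span (relSet F T)) : ∀ i, c i = 0 := by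
  intro i
  have := E1 h i
  rw [coeff_sum] at this
  have e1 : ∀ a : Fin n, coeff (Finsupp.single i 1) (C (c a) * X a)
      = if a = i then c a else 0 := by
    intro a
    rw [X_eq_monomial, C_mul_monomial, mul_one, coeff_monomial,
      if_congr (Finsupp.single_left_inj one_ne_zero) rfl rfl]
  rwa [Finset.sum_congr rfl fun a _ => e1 a, Finset.sum_ite_eq' Finset.univ i c,
    if_pos (Finset.mem_univ i)] at this


lemma mk_sum_C_mul_X (T : Matrix (Fin n) (Fin n) F) (w : Fin n → F) :
    Ideal.Quotient.mk (Ideal.span (relSet F T)) (∑ a : Fin n, C (w a) * X a)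
      = ∑ a : Fin n, w a • NTgen F T a := by
  rw [← Ideal.Quotient.mkₐ_eq_mk F, map_sum]
  refine Finset.sum_congr rfl fun a _ => ?_
  rw [← smul_eq_C_mul]
  rw [map_smul]
  rfl

lemma gen_sq_zero (i : Fin n) : (NTgen F (0 : Matrix (Fin n) (Fin n) F) i) ^ 2 = 0 := by
  show (Ideal.Quotient.mk _ (X i)) ^ 2 = 0
  rw [← map_pow, Ideal.Quotient.eq_zero_iff_mem]
  refine Ideal.subset_span ⟨i, ?_⟩
  simp

theorem forward (h2 : (2 : F) ≠ 0) (U : Matrix (Fin n) (Fin n) F) (hU : SLTM F U)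
    (hiso : NTIso F U 0) :
    ∀ r c : Fin n, 0 < (c : ℕ) → U r c ≠ 0 →
      ∀ i : Fin n, i < c → 2 * U r i + U r c * U c i = 0 := by
  classical
  obtain ⟨e, he1, he2⟩ := hiso
  have hd0 : ∀ i, ∃ dd : Fin n → F,
      (∑ k : Fin n, dd k • NTgen F U k) = e.symm (NTgen F 0 i) := by
    intro i
    exact (Submodule.mem_span_range_iff_exists_fun F).mp (he2 i)
  choose d hd using hd0
  have hg0 : ∀ k, ∃ gg : Fin n → F,
      (∑ m : Fin n, gg m • NTgen F 0 m) = e (NTgen F U k) := by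
    intro k
    exact (Submodule.mem_span_range_iff_exists_fun F).mp (he1 k)
  choose g hg using hg0
  -- the quadratic equations for each column
  have hsqmem : ∀ i, (∑ a : Fin n, C (d i a) * X a) ^ 2 ∈ Ideal.span (relSet F U) := by
    intro i
    rw [← Ideal.Quotient.eq_zero_iff_mem, map_pow, mk_sum_C_mul_X, hd i, ← map_pow,
      gen_sq_zero, map_zero]
  have heq : ∀ i : Fin n, ∀ {j k : Fin n}, j < k →
      2 * (d i j * d i k) + U k j * (d i k * d i k) = 0 :=
    fun i => fun {j k} hjk => col_eqs (hsqmem i) hjk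
  -- the product identity g ∘ d = 1
  have hGD : ∀ i m : Fin n, (∑ k : Fin n, d i k * g k m) = if m = i then 1 else 0 := by
    intro i m
    have h1 : NTgen F 0 i = ∑ mm : Fin n, (∑ k : Fin n, d i k * g k mm) • NTgen F 0 mm := by
      calc NTgen F 0 i = e (e.symm (NTgen F 0 i)) := (e.apply_symm_apply _).symm
        _ = e (∑ k : Fin n, d i k • NTgen F U k) := by rw [hd]
        _ = ∑ k : Fin n, d i k • e (NTgen F U k) := by
            rw [map_sum]
            exact Finset.sum_congr rfl fun k _ => map_smul e _ _
        _ = ∑ k : Fin n, d i k • ∑ mm : Fin n, g k mm • NTgen F 0 mm := by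
            exact Finset.sum_congr rfl fun k _ => by rw [hg]
        _ = ∑ k : Fin n, ∑ mm : Fin n, (d i k * g k mm) • NTgen F 0 mm := by
            refine Finset.sum_congr rfl fun k _ => ?_
            rw [Finset.smul_sum]
            exact Finset.sum_congr rfl fun mm _ => (smul_smul _ _ _)
        _ = ∑ mm : Fin n, ∑ k : Fin n, (d i k * g k mm) • NTgen F 0 mm := Finset.sum_comm
        _ = ∑ mm : Fin n, (∑ k : Fin n, d i k * g k mm) • NTgen F 0 mm := by
            exact Finset.sum_congr rfl fun mm _ => (Finset.sum_smul).symm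
    have h2 : ∑ mm : Fin n, (if mm = i then (1:F) else 0) • NTgen F 0 mm = NTgen F 0 i := by
      rw [Finset.sum_congr rfl fun mm _ => (ite_smul _ _ _ _)]
      simp [Finset.sum_ite_eq' Finset.univ i]
    set cc : Fin n → F := fun mm => (∑ k : Fin n, d i k * g k mm) - (if mm = i then 1 else 0)
      with hcc
    have h3 : (∑ a : Fin n, C (cc a) * X a) ∈ Ideal.span (relSet F (0 : Matrix (Fin n) (Fin n) F)) := by
      rw [← Ideal.Quotient.eq_zero_iff_mem, mk_sum_C_mul_X]
      have : ∑ a : Fin n, cc a • NTgen F 0 a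
          = (∑ mm : Fin n, (∑ k : Fin n, d i k * g k mm) • NTgen F 0 mm)
            - ∑ mm : Fin n, (if mm = i then (1:F) else 0) • NTgen F 0 mm := by
        rw [← Finset.sum_sub_distrib]
        exact Finset.sum_congr rfl fun mm _ => (sub_smul _ _ _)
      rw [this, h2, ← h1, sub_self]
    have := lin_indep h3 m
    rw [hcc] at this
    exact sub_eq_zero.mp this
  -- injectivity of the row system
  have hrowinj : ∀ x : Fin n → F, (∀ k, ∑ i' : Fin n, x i' * d i' k = 0) → ∀ i', x i' = 0 := by
    intro x hx i'
    have h1 : ∑ m : Fin n, x m * (∑ k : Fin n, d m k * g k i') = x i' := by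
      rw [Finset.sum_congr rfl fun m _ => by rw [hGD m i']]
      rw [Finset.sum_congr rfl fun m (_ : m ∈ Finset.univ) => (mul_ite _ _ _ _ : x m * _ = _)]
      simp [Finset.sum_ite_eq Finset.univ i']
    rw [← h1]
    have h2 : ∀ m : Fin n, x m * (∑ k : Fin n, d m k * g k i')
        = ∑ k : Fin n, (x m * d m k) * g k i' := by
      intro m
      rw [Finset.mul_sum]
      exact Finset.sum_congr rfl fun k _ => by ring
    rw [Finset.sum_congr rfl fun m _ => h2 m, Finset.sum_comm]
    have h3 : ∀ k : Fin n, ∑ m : Fin n, (x m * d m k) * g k i' = 0 := by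
      intro k
      rw [← Finset.sum_mul, hx k, zero_mul]
    rw [Finset.sum_congr rfl fun k _ => h3 k, Finset.sum_const, smul_zero]
  -- each row d i is nonzero
  have hrow_ne : ∀ i : Fin n, ∃ t, d i t ≠ 0 := by
    intro i
    by_contra hcon
    push_neg at hcon
    have : ∀ i', (fun i'' => if i'' = i then (1:F) else 0) i' = 0 := by
      refine hrowinj _ (fun k => ?_)
      rw [Finset.sum_congr rfl fun i' (_ : i' ∈ Finset.univ) => (ite_mul _ _ _ _)]
      simp [Finset.sum_ite_eq' Finset.univ i, hcon]
    have := this i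
    simp at this
  -- the top index of each row
  have htop : ∀ i : Fin n, ∃ t : Fin n, d i t ≠ 0 ∧ ∀ k, t < k → d i k = 0 := by
    intro i
    obtain ⟨t0, ht0⟩ := hrow_ne i
    have hne : (Finset.univ.filter (fun k => d i k ≠ 0)).Nonempty :=
      ⟨t0, by simp [ht0]⟩
    refine ⟨(Finset.univ.filter (fun k => d i k ≠ 0)).max' hne, ?_, ?_⟩
    · have := (Finset.univ.filter (fun k => d i k ≠ 0)).max'_mem hne
      rw [Finset.mem_filter] at this
      exact this.2
    · intro k hk
      by_contra hdk
      exact absurd (Finset.le_max' _ k (by simp [hdk])) (not_le.mpr hk)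
  choose top htop1 htop2 using htop
  -- below-top entries are determined
  have hbelow : ∀ i : Fin n, ∀ w : Fin n, w < top i →
      2 * d i w = -(U (top i) w) * d i (top i) := by
    intro i w hw
    have := heq i hw
    have hfac : d i (top i) * (2 * d i w + U (top i) w * d i (top i)) = 0 := by
      linear_combination this
    rcases mul_eq_zero.mp hfac with h | h
    · exact absurd h (htop1 i)
    · linear_combination h
  -- top is injective
  have htopinj : Function.Injective top := by
    intro i i' hii'
    by_contra hne
    have hprop : ∀ k, d i k * d i' (top i) - d i' k * d i (top i) = 0 := by
      intro k
      rcases lt_trichotomy k (top i) with hk | hk | hk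
      · have e1 := hbelow i k hk
        have e2 := hbelow i' k (by rw [← hii']; exact hk)
        rw [← hii'] at e2
        have hh : 2 * (d i k * d i' (top i) - d i' k * d i (top i)) = 0 := by
          linear_combination d i' (top i) * e1 - d i (top i) * e2
        rcases mul_eq_zero.mp hh with h | h
        · exact absurd h h2
        · exact h
      · rw [hk]; ring
      · rw [htop2 i k hk, htop2 i' k (by rw [← hii']; exact hk)]; ring
    have hx := hrowinj (fun i'' => (if i'' = i then d i' (top i) else 0)
        + (if i'' = i' then -(d i (top i)) else 0)) ?_ i'
    · rw [if_neg (fun h : i' = i => hne h.symm), if_pos rfl, zero_add] at hx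
      have hti' : d i' (top i) ≠ 0 := by
        rw [hii']
        exact htop1 i'
      exact absurd (neg_eq_zero.mp hx) (htop1 i)
    · intro k
      simp only [add_mul, ite_mul, zero_mul, Finset.sum_add_distrib,
        Finset.sum_ite_eq' Finset.univ, Finset.mem_univ, if_true]
      linear_combination hprop k
  have htopsurj : Function.Surjective top := Finite.surjective_of_injective htopinj
  -- main conclusion
  intro r c hc hUrc i0 hi0
  obtain ⟨i, hi⟩ := htopsurj r
  have hcr : c < r := by
    rcases lt_or_ge c r with h | h
    · exact h
    · exact absurd (hU r c h) hUrc
  have hdr : d i r ≠ 0 := hi ▸ htop1 i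
  have hA : 2 * d i i0 = -(U r i0) * d i r := by
    have := hbelow i i0 (by rw [hi]; exact lt_trans hi0 hcr)
    rwa [hi] at this
  have hB : 2 * d i c = -(U r c) * d i r := by
    have := hbelow i c (by rw [hi]; exact hcr)
    rwa [hi] at this
  have hC := heq i hi0
  have key : (U r c * (d i r * d i r)) * (2 * U r i0 + U r c * U c i0) = 0 := by
    linear_combination (2 * U r c * d i r) * hA
      + (-(4 * d i i0) + U c i0 * U r c * d i r - 2 * U c i0 * d i c) * hB + 4 * hC
  rcases mul_eq_zero.mp key with h | h
  · exact absurd h (mul_ne_zero hUrc (mul_ne_zero hdr hdr))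
  · exact h


section Reverse

/-- The linear form of row `r`. -/
def Lpoly (U : Matrix (Fin n) (Fin n) F) (r : Fin n) : MvPolynomial (Fin n) F :=
  ∑ j ∈ Finset.univ.filter (fun j => j < r), C (U r j) * X j

/-- The twisted generators. -/
def Wpoly (U : Matrix (Fin n) (Fin n) F) (i : Fin n) : MvPolynomial (Fin n) F :=
  X i - C (2⁻¹ : F) * Lpoly U i

/-- The relators. -/
def relpoly (U : Matrix (Fin n) (Fin n) F) (i : Fin n) : MvPolynomial (Fin n) F :=
  X i ^ 2 - ∑ j ∈ Finset.univ.filter (fun j => j < i), C (U i j) * X j * X i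

lemma relpoly_mem (U : Matrix (Fin n) (Fin n) F) (i : Fin n) :
    relpoly U i ∈ relSet F U := ⟨i, rfl⟩

lemma fin_strong_induction {P : Fin n → Prop}
    (step : ∀ i : Fin n, (∀ j : Fin n, j < i → P j) → P i) : ∀ i, P i := by
  suffices h : ∀ N : ℕ, ∀ i : Fin n, i.val < N → P i from fun i => h n i i.2
  intro N
  induction N with
  | zero => exact fun i hi => absurd hi (Nat.not_lt_zero _)
  | succ N ih =>
    intro i hi
    refine step i (fun j hj => ih j ?_)
    have hj' : j.val < i.val := hj
    omega

lemma W_sq (h2 : (2 : F) ≠ 0) (U : Matrix (Fin n) (Fin n) F) (i : Fin n) :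
    Wpoly U i ^ 2 = relpoly U i + (C (2⁻¹ : F)) ^ 2 * (Lpoly U i) ^ 2 := by
  have hh : (C (2⁻¹ : F) : MvPolynomial (Fin n) F) * 2 = 1 := by
    have h1 : ((2 : MvPolynomial (Fin n) F)) = C (2 : F) := by
      rw [map_ofNat]
    rw [h1, ← C_mul, inv_mul_cancel₀ h2, C_1]
  have hL : (∑ j ∈ Finset.univ.filter (fun j => j < i), C (U i j) * X j) * X i
      = ∑ j ∈ Finset.univ.filter (fun j => j < i), C (U i j) * X j * X i :=
    Finset.sum_mul _ _ _
  rw [Wpoly, relpoly, ← hL, ← Lpoly]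
  linear_combination (-(Lpoly U i * X i)) * hh

lemma L_zero {U : Matrix (Fin n) (Fin n) F} {r : Fin n} (h : ∀ j, U r j = 0) :
    Lpoly U r = 0 := by
  rw [Lpoly]
  refine Finset.sum_eq_zero fun j _ => ?_
  rw [h j, map_zero, zero_mul]

lemma leader_exists {U : Matrix (Fin n) (Fin n) F} (r : Fin n) (h : ∃ j, U r j ≠ 0) :
    ∃ c, IsLeader F U r c := by
  classical
  obtain ⟨j0, hj0⟩ := h
  have hne : (Finset.univ.filter (fun j => U r j ≠ 0)).Nonempty := ⟨j0, by simp [hj0]⟩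
  refine ⟨(Finset.univ.filter (fun j => U r j ≠ 0)).max' hne, ?_, ?_⟩
  · have := (Finset.univ.filter (fun j => U r j ≠ 0)).max'_mem hne
    rw [Finset.mem_filter] at this
    exact this.2
  · intro j hj
    by_contra hUj
    exact absurd (Finset.le_max' _ j (by simp [hUj])) (not_le.mpr hj)

lemma leader_lt {U : Matrix (Fin n) (Fin n) F} (hU : SLTM F U) {r c : Fin n}
    (h : U r c ≠ 0) : c < r := by
  rcases lt_or_ge c r with h' | h'
  · exact h'
  · exact absurd (hU r c h') h

/-- Under condition (ii), the linear form of a row is a multiple of a twisted generator. -/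
lemma L_eq (h2 : (2 : F) ≠ 0) {U : Matrix (Fin n) (Fin n) F} (hU : SLTM F U)
    (hii : ∀ r c : Fin n, 0 < (c : ℕ) → U r c ≠ 0 →
      ∀ i : Fin n, i < c → 2 * U r i + U r c * U c i = 0)
    {r c : Fin n} (hlead : IsLeader F U r c) :
    Lpoly U r = C (U r c) * Wpoly U c := by
  classical
  have hcr : c < r := leader_lt hU hlead.1
  have hsub : Finset.univ.filter (fun j => j ≤ c) ⊆ Finset.univ.filter (fun j => j < r) := by
    intro j hj
    rw [Finset.mem_filter] at hj ⊢
    exact ⟨hj.1, lt_of_le_of_lt hj.2 hcr⟩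
  have hvan : ∀ j ∈ Finset.univ.filter (fun j => j < r),
      j ∉ Finset.univ.filter (fun j => j ≤ c) → C (U r j) * X j = 0 := by
    intro j hj1 hj2
    rw [Finset.mem_filter] at hj1 hj2
    have : c < j := by
      rcases lt_or_ge c j with h | h
      · exact h
      · exact absurd ⟨Finset.mem_univ j, h⟩ hj2
    rw [hlead.2 j this, map_zero, zero_mul]
  have hins : Finset.univ.filter (fun j => j ≤ c)
      = insert c (Finset.univ.filter (fun j => j < c)) := by
    ext j
    simp only [Finset.mem_filter, Finset.mem_insert, Finset.mem_univ, true_and]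
    constructor
    · intro h
      rcases eq_or_lt_of_le h with h' | h'
      · exact Or.inl h'
      · exact Or.inr h'
    · rintro (rfl | h)
      · exact le_refl _
      · exact le_of_lt h
  have hnotmem : c ∉ Finset.univ.filter (fun j => j < c) := by simp
  rw [Lpoly, ← Finset.sum_subset hsub hvan, hins, Finset.sum_insert hnotmem]
  have hsum2 : ∑ j ∈ Finset.univ.filter (fun j => j < c), C (U r j) * X j
      = -(C (U r c) * (C (2⁻¹ : F) * Lpoly U c)) := by
    by_cases hc0 : (c : ℕ) = 0
    · have hempty : Finset.univ.filter (fun j => j < c) = (∅ : Finset (Fin n)) := by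
        refine Finset.filter_eq_empty_iff.mpr (fun {j} _ => ?_)
        intro hjc
        have : (j : ℕ) < (c : ℕ) := hjc
        omega
      rw [Lpoly, hempty, Finset.sum_empty, Finset.sum_empty, mul_zero, mul_zero, neg_zero]
    · have hterm : ∀ j ∈ Finset.univ.filter (fun j => j < c),
          C (U r j) * X j = -(C (U r c) * (C (2⁻¹ : F) * (C (U c j) * X j))) := by
        intro j hj
        rw [Finset.mem_filter] at hj
        have hcpos : 0 < (c : ℕ) := Nat.pos_of_ne_zero hc0
        have heq := hii r c hcpos hlead.1 j hj.2
        have hval : U r j = -(U r c * (2⁻¹ * U c j)) := by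
          field_simp
          linear_combination heq
        rw [hval, map_neg, map_mul, map_mul, neg_mul]
        ring
      rw [Finset.sum_congr rfl hterm, Finset.sum_neg_distrib, Lpoly, Finset.mul_sum,
        Finset.mul_sum]
  rw [hsum2, Wpoly]
  ring

lemma X_sq_mem_zero (k : Fin n) :
    (X k : MvPolynomial (Fin n) F) ^ 2
      ∈ Ideal.span (relSet F (0 : Matrix (Fin n) (Fin n) F)) := by
  refine Ideal.subset_span ⟨k, ?_⟩
  simp

lemma W_sq_mem (h2 : (2 : F) ≠ 0) {U : Matrix (Fin n) (Fin n) F} (hU : SLTM F U)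
    (hii : ∀ r c : Fin n, 0 < (c : ℕ) → U r c ≠ 0 →
      ∀ i : Fin n, i < c → 2 * U r i + U r c * U c i = 0) :
    ∀ i : Fin n, Wpoly U i ^ 2 ∈ Ideal.span (relSet F U) := by
  classical
  refine fin_strong_induction (fun i ih => ?_)
  rw [W_sq h2]
  refine Ideal.add_mem _ (Ideal.subset_span (relpoly_mem U i)) ?_
  by_cases hrow : ∃ j, U i j ≠ 0
  · obtain ⟨c, hc⟩ := leader_exists i hrow
    rw [L_eq h2 hU hii hc]
    have hci : c < i := leader_lt hU hc.1
    have : (C (2⁻¹ : F)) ^ 2 * (C (U i c) * Wpoly U c) ^ 2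
        = ((C (2⁻¹ : F)) ^ 2 * (C (U i c)) ^ 2) * Wpoly U c ^ 2 := by ring
    rw [this]
    exact Ideal.mul_mem_left _ _ (ih c hci)
  · push_neg at hrow
    rw [L_zero hrow]
    rw [zero_pow two_ne_zero, mul_zero]
    exact Ideal.zero_mem _

/-- The inverse twisted generators, by strong recursion. -/
def Zpoly (U : Matrix (Fin n) (Fin n) F) (i : Fin n) : MvPolynomial (Fin n) F :=
  X i + C (2⁻¹ : F) * ∑ j ∈ (Finset.univ.filter (fun j => j < i)).attach,
      C (U i j.1) * Zpoly U j.1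
termination_by i.val
decreasing_by
  exact (Finset.mem_filter.mp j.2).2

lemma Zpoly_eq (U : Matrix (Fin n) (Fin n) F) (i : Fin n) :
    Zpoly U i = X i + C (2⁻¹ : F) * ∑ j ∈ Finset.univ.filter (fun j => j < i),
      C (U i j) * Zpoly U j := by
  rw [Zpoly, Finset.sum_attach (Finset.univ.filter (fun j => j < i))
    (fun j => C (U i j) * Zpoly U j)]

lemma aeval_L (U : Matrix (Fin n) (Fin n) F) (v : Fin n → MvPolynomial (Fin n) F)
    (r : Fin n) :
    MvPolynomial.aeval v (Lpoly U r)
      = ∑ j ∈ Finset.univ.filter (fun j => j < r), C (U r j) * v j := by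
  rw [Lpoly, map_sum]
  refine Finset.sum_congr rfl fun j _ => ?_
  rw [map_mul, aeval_X]
  congr 1
  exact aeval_C _ _

lemma aeval_Z_W (U : Matrix (Fin n) (Fin n) F) (i : Fin n) :
    MvPolynomial.aeval (Zpoly U) (Wpoly U i) = X i := by
  rw [Wpoly, map_sub, map_mul, aeval_X, aeval_L, aeval_C]
  rw [Zpoly_eq U i]
  have : (algebraMap F (MvPolynomial (Fin n) F)) (2⁻¹ : F) = C (2⁻¹ : F) := rfl
  rw [this]
  ring

lemma aeval_W_Z (U : Matrix (Fin n) (Fin n) F) :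
    ∀ i : Fin n, MvPolynomial.aeval (Wpoly U) (Zpoly U i) = X i := by
  refine fin_strong_induction (fun i ih => ?_)
  rw [Zpoly_eq U i, map_add, map_mul, aeval_X, aeval_C, map_sum]
  have hsum : ∀ j ∈ Finset.univ.filter (fun j => j < i),
      MvPolynomial.aeval (Wpoly U) (C (U i j) * Zpoly U j) = C (U i j) * X j := by
    intro j hj
    rw [Finset.mem_filter] at hj
    rw [map_mul, aeval_C, ih j hj.2]
    rfl
  rw [Finset.sum_congr rfl hsum]
  have : (algebraMap F (MvPolynomial (Fin n) F)) (2⁻¹ : F) = C (2⁻¹ : F) := rfl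
  rw [this, Wpoly, Lpoly]
  ring

lemma Z_in_span (U : Matrix (Fin n) (Fin n) F) :
    ∀ i : Fin n, Zpoly U i ∈ Submodule.span F (Set.range (X : Fin n → MvPolynomial (Fin n) F)) := by
  refine fin_strong_induction (fun i ih => ?_)
  rw [Zpoly_eq U i]
  refine Submodule.add_mem _ (Submodule.subset_span ⟨i, rfl⟩) ?_
  rw [Finset.mul_sum]
  refine Submodule.sum_mem _ fun j hj => ?_
  rw [Finset.mem_filter] at hj
  rw [← mul_assoc, ← map_mul, ← smul_eq_C_mul]
  exact Submodule.smul_mem _ _ (ih j hj.2)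

lemma W_in_span (U : Matrix (Fin n) (Fin n) F) (i : Fin n) :
    Wpoly U i ∈ Submodule.span F (Set.range (X : Fin n → MvPolynomial (Fin n) F)) := by
  rw [Wpoly]
  refine Submodule.sub_mem _ (Submodule.subset_span ⟨i, rfl⟩) ?_
  rw [Lpoly, Finset.mul_sum]
  refine Submodule.sum_mem _ fun j hj => ?_
  rw [← mul_assoc, ← map_mul, ← smul_eq_C_mul]
  exact Submodule.smul_mem _ _ (Submodule.subset_span ⟨j, rfl⟩)

/-- The reverse direction of the theorem. -/
theorem reverse (h2 : (2 : F) ≠ 0) (U : Matrix (Fin n) (Fin n) F) (hU : SLTM F U)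
    (hii : ∀ r c : Fin n, 0 < (c : ℕ) → U r c ≠ 0 →
      ∀ i : Fin n, i < c → 2 * U r i + U r c * U c i = 0) :
    NTIso F U 0 := by
  classical
  set IU := Ideal.span (relSet F U) with hIU
  set I0 := Ideal.span (relSet F (0 : Matrix (Fin n) (Fin n) F)) with hI0
  -- the algebra map A(U) → A(0)
  have hvanU : ∀ p ∈ IU,
      ((Ideal.Quotient.mkₐ F I0).comp (MvPolynomial.aeval (Zpoly U))) p = 0 := by
    intro p hp
    have hle : IU ≤ RingHom.ker ((Ideal.Quotient.mkₐ F I0).comp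
        (MvPolynomial.aeval (Zpoly U))) := by
      rw [hIU, Ideal.span_le]
      rintro q ⟨i, rfl⟩
      rw [SetLike.mem_coe, RingHom.mem_ker]
      have hrel : (X i ^ 2 - ∑ j ∈ Finset.univ.filter (fun j => j < i),
          C (U i j) * X j * X i) = relpoly U i := rfl
      rw [hrel]
      have hrw : relpoly U i = Wpoly U i ^ 2 - (C (2⁻¹ : F)) ^ 2 * (Lpoly U i) ^ 2 := by
        rw [W_sq h2]; ring
      rw [AlgHom.comp_apply, hrw, map_sub, map_pow, aeval_Z_W]
      show Ideal.Quotient.mkₐ F I0 _ = 0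
      rw [map_sub, Ideal.Quotient.mkₐ_eq_mk, sub_eq_zero]
      by_cases hrow : ∃ j, U i j ≠ 0
      · obtain ⟨c, hc⟩ := leader_exists i hrow
        rw [L_eq h2 hU hii hc]
        have hre : (MvPolynomial.aeval (Zpoly U)) ((C (2⁻¹ : F)) ^ 2
            * (C (U i c) * Wpoly U c) ^ 2)
            = ((C (2⁻¹ : F)) ^ 2 * (C (U i c)) ^ 2) * X c ^ 2 := by
          rw [map_mul, map_pow, map_pow, map_mul, aeval_Z_W, aeval_C, aeval_C,
            MvPolynomial.algebraMap_eq]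
          ring
        rw [hre, Ideal.Quotient.eq]
        have hdiff : X i ^ 2 - (C (2⁻¹ : F)) ^ 2 * (C (U i c)) ^ 2 * X c ^ 2
            = X i ^ 2 - ((C (2⁻¹ : F)) ^ 2 * (C (U i c)) ^ 2) * X c ^ 2 := by ring
        rw [hdiff]
        exact Ideal.sub_mem _ (X_sq_mem_zero i)
          (Ideal.mul_mem_left _ _ (X_sq_mem_zero c))
      · push_neg at hrow
        rw [L_zero hrow, zero_pow two_ne_zero, mul_zero, map_zero, map_zero,
          Ideal.Quotient.eq_zero_iff_mem]
        exact X_sq_mem_zero i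
    exact hle hp
  have hvan0 : ∀ p ∈ I0,
      ((Ideal.Quotient.mkₐ F IU).comp (MvPolynomial.aeval (Wpoly U))) p = 0 := by
    intro p hp
    have hle : I0 ≤ RingHom.ker ((Ideal.Quotient.mkₐ F IU).comp
        (MvPolynomial.aeval (Wpoly U))) := by
      rw [hI0, Ideal.span_le]
      rintro q ⟨i, rfl⟩
      rw [SetLike.mem_coe, RingHom.mem_ker]
      rw [AlgHom.comp_apply, map_sub, map_pow, aeval_X]
      have hzero : (MvPolynomial.aeval (Wpoly U)) (∑ j ∈ Finset.univ.filter (fun j => j < i),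
          C ((0 : Matrix (Fin n) (Fin n) F) i j) * X j * X i) = 0 := by
        rw [map_sum]
        refine Finset.sum_eq_zero fun j _ => ?_
        rw [Matrix.zero_apply, map_zero, zero_mul, zero_mul, map_zero]
      rw [hzero, sub_zero]
      show Ideal.Quotient.mkₐ F IU _ = 0
      rw [Ideal.Quotient.mkₐ_eq_mk, Ideal.Quotient.eq_zero_iff_mem]
      exact W_sq_mem h2 hU hii i
    exact hle hp
  set φ : NTAlg F U →ₐ[F] NTAlg F (0 : Matrix (Fin n) (Fin n) F) :=
    Ideal.Quotient.liftₐ IU ((Ideal.Quotient.mkₐ F I0).comp (MvPolynomial.aeval (Zpoly U))) hvanU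
    with hφ
  set ψ : NTAlg F (0 : Matrix (Fin n) (Fin n) F) →ₐ[F] NTAlg F U :=
    Ideal.Quotient.liftₐ I0 ((Ideal.Quotient.mkₐ F IU).comp (MvPolynomial.aeval (Wpoly U))) hvan0
    with hψ
  have hφmk : ∀ p, φ (Ideal.Quotient.mk IU p) = Ideal.Quotient.mk I0 (MvPolynomial.aeval (Zpoly U) p) := by
    intro p
    rw [hφ, Ideal.Quotient.liftₐ_apply]
    rfl
  have hψmk : ∀ p, ψ (Ideal.Quotient.mk I0 p) = Ideal.Quotient.mk IU (MvPolynomial.aeval (Wpoly U) p) := by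
    intro p
    rw [hψ, Ideal.Quotient.liftₐ_apply]
    rfl
  have hcomp1 : φ.comp ψ = AlgHom.id F (NTAlg F (0 : Matrix (Fin n) (Fin n) F)) := by
    refine Ideal.Quotient.algHom_ext F (MvPolynomial.algHom_ext fun i => ?_)
    show φ (ψ (Ideal.Quotient.mk I0 (X i))) = Ideal.Quotient.mk I0 (X i)
    rw [hψmk, aeval_X, hφmk, aeval_Z_W]
  have hcomp2 : ψ.comp φ = AlgHom.id F (NTAlg F U) := by
    refine Ideal.Quotient.algHom_ext F (MvPolynomial.algHom_ext fun i => ?_)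
    show ψ (φ (Ideal.Quotient.mk IU (X i))) = Ideal.Quotient.mk IU (X i)
    rw [hφmk, aeval_X, hψmk, aeval_W_Z]
  set e : NTAlg F U ≃ₐ[F] NTAlg F (0 : Matrix (Fin n) (Fin n) F) :=
    AlgEquiv.ofAlgHom φ ψ hcomp1 hcomp2 with he
  have hspan : ∀ (T : Matrix (Fin n) (Fin n) F) (p : MvPolynomial (Fin n) F),
      p ∈ Submodule.span F (Set.range (X : Fin n → MvPolynomial (Fin n) F)) →
      Ideal.Quotient.mk (Ideal.span (relSet F T)) p
        ∈ Submodule.span F (Set.range (NTgen F T)) := by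
    intro T p hp
    have hmap := Submodule.mem_map_of_mem
      (f := (Ideal.Quotient.mkₐ F (Ideal.span (relSet F T))).toLinearMap) hp
    rw [Submodule.map_span, ← Set.range_comp] at hmap
    exact hmap
  refine ⟨e, ?_, ?_⟩
  · intro j
    have h1 : e (NTgen F U j) = Ideal.Quotient.mk I0 (Zpoly U j) := by
      have h2 : φ (Ideal.Quotient.mk IU (X j)) = Ideal.Quotient.mk I0 (Zpoly U j) := by
        rw [hφmk, aeval_X]
      exact h2
    rw [h1]
    exact hspan _ _ (Z_in_span U j)
  · intro j
    have h1 : e.symm (NTgen F 0 j) = Ideal.Quotient.mk IU (Wpoly U j) := by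
      rw [AlgEquiv.symm_apply_eq]
      have h2 : φ (Ideal.Quotient.mk IU (Wpoly U j)) = Ideal.Quotient.mk I0 (X j) := by
        rw [hφmk, aeval_Z_W]
      exact h2.symm
    rw [h1]
    exact hspan _ _ (W_in_span U j)

end Reverse

end StmtAux


/-- Characterization of the class of the zero matrix (Theorem 2.5). -/
theorem stmt18 {n : ℕ} (h2 : (2 : F) ≠ 0) (U : Matrix (Fin n) (Fin n) F)
    (hU : SLTM F U) (hne : U ≠ 0) :
    NTIso F U 0 ↔
      ((∀ r c : Fin n, IsLeader F U r c → (c : ℕ) = 0) ∨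
       (∀ r c : Fin n, 0 < (c : ℕ) → U r c ≠ 0 →
          ∀ i : Fin n, i < c → 2 * U r i + U r c * U c i = 0)) := by
  constructor
  · intro hiso
    exact Or.inr (StmtAux.forward h2 U hU hiso)
  · intro h
    have hii : ∀ r c : Fin n, 0 < (c : ℕ) → U r c ≠ 0 →
        ∀ i : Fin n, i < c → 2 * U r i + U r c * U c i = 0 := by
      rcases h with h1 | h2'
      · intro r c hc hUrc i hic
        exfalso
        obtain ⟨c', hc'⟩ := StmtAux.leader_exists r ⟨c, hUrc⟩
        have hc0 := h1 r c' hc'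
        have hle : c ≤ c' := by
          by_contra hlt
          push_neg at hlt
          exact hUrc (hc'.2 c hlt)
        have : (c : ℕ) ≤ (c' : ℕ) := hle
        omega
      · exact h2'
    exact StmtAux.reverse h2 U hU hii
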